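/- Let d ≥ 1, p > 1, let c ∈ ℝ^d satisfy c_f > 0 for all f, let y ∈ ℝ^d satisfy y_f ≥ 0 for all f with y ≠ 0, and let α > 0. Set S = Σ_g y_g · (y_g/c_g)^{1/(p-1)} (which is strictly positive) and define e* ∈ ℝ^d by e*_f = (α/S) · (y_f/c_f)^{1/(p-1)}. Then e* ≥ 0, yᵀe* = α, and e* minimizes the weighted ℓp cost Cost(e) = (Σ_f c_f e_f^p)^{1/p} over the set {e ∈ ℝ^d : e ≥ 0, yᵀe ≥ α}. In particular, the optimal effort invested in each feature f is proportional to (y_f/c_f)^{1/(p-1)}. -/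

import Mathlib

/-- For ℓp costs with p > 1, setting
`S = ∑ g, y g * (y g / c g)^(1/(p-1)) > 0` and
`e* f = (α / S) * (y f / c f)^(1/(p-1))`, the profile `e*` is nonnegative,
satisfies `yᵀe* = α`, and minimizes the weighted ℓp cost over
`{e ≥ 0 : yᵀe ≥ α}`: the optimal effort in each feature is proportional
to `(y f / c f)^(1/(p-1))`. -/
theorem stmt_4 (d : ℕ) (hd : 1 ≤ d) (p : ℝ) (hp : 1 < p)
    (c : Fin d → ℝ) (hc : ∀ f, 0 < c f)
    (y : Fin d → ℝ) (hy : ∀ f, 0 ≤ y f) (hy0 : y ≠ 0)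
    (α : ℝ) (hα : 0 < α) :
    let S : ℝ := ∑ g, y g * (y g / c g) ^ (1 / (p - 1))
    let estar : Fin d → ℝ := fun f => (α / S) * (y f / c f) ^ (1 / (p - 1))
    0 < S ∧ (∀ f, 0 ≤ estar f) ∧ (∑ f, y f * estar f) = α ∧
    ∀ e : Fin d → ℝ, (∀ f, 0 ≤ e f) → α ≤ ∑ f, y f * e f →
      (∑ f, c f * estar f ^ p) ^ (1 / p) ≤ (∑ f, c f * e f ^ p) ^ (1 / p) := by
  intro S estar
  have hp0 : (0:ℝ) < p := lt_trans one_pos hp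
  have hp0' : p ≠ 0 := hp0.ne'
  have hpm1 : (0:ℝ) < p - 1 := sub_pos.2 hp
  set r : ℝ := 1 / (p - 1) with hr_def
  have hr : 0 < r := by positivity
  set w : Fin d → ℝ := fun f => (y f / c f) ^ r with hw_def
  have hwf : ∀ f, w f = (y f / c f) ^ r := fun f => rfl
  have hw0 : ∀ f, 0 ≤ w f := fun f => Real.rpow_nonneg (div_nonneg (hy f) (hc f).le) r
  have hSdef : S = ∑ g, y g * w g := rfl
  -- there is a coordinate with positive y
  obtain ⟨f0, hf0⟩ : ∃ f, 0 < y f := by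
    by_contra h
    push_neg at h
    exact hy0 (funext fun f => le_antisymm (h f) (hy f))
  have hS : 0 < S := by
    rw [hSdef]
    refine Finset.sum_pos' (fun g _ => mul_nonneg (hy g) (hw0 g)) ⟨f0, Finset.mem_univ _, ?_⟩
    exact mul_pos hf0 (Real.rpow_pos_of_pos (div_pos hf0 (hc f0)) r)
  have hest : ∀ f, estar f = (α / S) * w f := fun f => rfl
  have haS : 0 < α / S := div_pos hα hS
  refine ⟨hS, fun f => mul_nonneg haS.le (hw0 f), ?_, ?_⟩
  · calc ∑ f, y f * estar f = (α / S) * ∑ f, y f * w f := by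
          rw [Finset.mul_sum]; exact Finset.sum_congr rfl fun f _ => by rw [hest f]; ring
      _ = α := by rw [← hSdef]; field_simp
  · intro e he hye
    set q : ℝ := p / (p - 1) with hq_def
    have hpq : p.HolderConjugate q := Real.HolderConjugate.conjExponent hp
    have hq0 : 0 < q := hpq.symm.pos
    have hq1r : q = 1 + r := by
      rw [hq_def, hr_def]
      field_simp
      ring
    have hrp : r * p = q := by
      rw [hq_def, hr_def]
      field_simp
    -- key pointwise identity: (y/c)^q = (y/c) * w
    have hkey : ∀ f, (y f / c f) ^ q = (y f / c f) * w f := by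
      intro f
      rcases eq_or_lt_of_le (hy f) with h0 | h0
      · rw [← h0]
        simp [Real.zero_rpow hq0.ne']
      · have hyc : 0 < y f / c f := div_pos h0 (hc f)
        rw [hq1r, Real.rpow_add hyc, Real.rpow_one, hwf f]
    -- cost at estar
    have hcost : ∑ f, c f * estar f ^ p = (α / S) ^ p * S := by
      rw [hSdef, Finset.mul_sum]
      refine Finset.sum_congr rfl fun f _ => ?_
      rw [hest f, Real.mul_rpow haS.le (hw0 f)]
      have hwp : w f ^ p = (y f / c f) * w f := by
        rw [hwf f, ← Real.rpow_mul (div_nonneg (hy f) (hc f).le), hrp, hkey f, ← hwf f]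
      rw [hwp]
      have hcne : c f ≠ 0 := (hc f).ne'
      field_simp
      rw [← hSdef]; ring
    -- second Hölder factor equals S
    have hT : ∑ f, |y f * c f ^ (-(1/p))| ^ q = S := by
      rw [hSdef]
      refine Finset.sum_congr rfl fun f _ => ?_
      have hcp : (0:ℝ) < c f ^ (-(1/p)) := Real.rpow_pos_of_pos (hc f) _
      rw [abs_of_nonneg (mul_nonneg (hy f) hcp.le),
        Real.mul_rpow (hy f) hcp.le, ← Real.rpow_mul (hc f).le]
      have hcq : c f ^ (-(1/p) * q) = c f ^ (-r) := by
        congr 1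
        rw [hq_def, hr_def]; field_simp
      rw [hcq]
      rcases eq_or_lt_of_le (hy f) with h0 | h0
      · rw [← h0]
        simp [Real.zero_rpow hq0.ne']
      · have hyc : 0 < y f / c f := div_pos h0 (hc f)
        rw [hq1r, Real.rpow_add h0, Real.rpow_one, hwf f, Real.div_rpow (hy f) (hc f).le,
          Real.rpow_neg (hc f).le, div_eq_mul_inv]
        ring
    -- Hölder inequality
    have H := Real.inner_le_Lp_mul_Lq Finset.univ (fun f => c f ^ (1/p) * e f)
      (fun f => y f * c f ^ (-(1/p))) hpq
    have hL : ∑ f, (c f ^ (1/p) * e f) * (y f * c f ^ (-(1/p))) = ∑ f, y f * e f := by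
      refine Finset.sum_congr rfl fun f _ => ?_
      have : c f ^ (1/p) * c f ^ (-(1/p)) = 1 := by
        rw [← Real.rpow_add (hc f)]
        simp
      calc (c f ^ (1/p) * e f) * (y f * c f ^ (-(1/p)))
          = (c f ^ (1/p) * c f ^ (-(1/p))) * (y f * e f) := by ring
        _ = y f * e f := by rw [this]; ring
    have hF : ∑ f, |c f ^ (1/p) * e f| ^ p = ∑ f, c f * e f ^ p := by
      refine Finset.sum_congr rfl fun f _ => ?_
      have hcp : (0:ℝ) ≤ c f ^ (1/p) := (Real.rpow_pos_of_pos (hc f) _).le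
      rw [abs_of_nonneg (mul_nonneg hcp (he f)), Real.mul_rpow hcp (he f),
        ← Real.rpow_mul (hc f).le, one_div_mul_cancel hp0', Real.rpow_one]
    rw [hL, hF, hT] at H
    set B : ℝ := (∑ f, c f * e f ^ p) ^ (1 / p) with hB_def
    have hαB : α ≤ B * S ^ (1/q) := le_trans hye H
    have hSq : 0 < S ^ (1/q) := Real.rpow_pos_of_pos hS _
    -- compute LHS
    have hLHS : (∑ f, c f * estar f ^ p) ^ (1/p) = (α / S) * S ^ (1/p) := by
      rw [hcost, Real.mul_rpow (Real.rpow_nonneg haS.le p) hS.le,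
        ← Real.rpow_mul haS.le, mul_one_div_cancel hp0', Real.rpow_one]
    rw [hLHS]
    rw [← mul_le_mul_iff_of_pos_right hSq]
    calc (α / S) * S ^ (1/p) * S ^ (1/q) = (α / S) * S ^ (1/p + 1/q) := by
          rw [Real.rpow_add hS]; ring
      _ = α := by
          rw [one_div, one_div, hpq.inv_add_inv_eq_one, Real.rpow_one]
          field_simp
      _ ≤ B * S ^ (1/q) := hαB
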